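/- Suppose (P_j)_{j≥0} is a sequence of nonnegative reals with P_j ≤ C·j^(D-1) for j ≥ 1 (C > 0, D ≥ 2), and suppose that for some constants A, B > 0 one has ∑_{l=0}^{j-1} P_l ≤ A + B·√(max(1,P_j)) for all j ≥ 1. Then ∑_{l=0}^{∞} P_l < ∞. -/

import Mathlib

theorem gp_potential_summable (C A B : ℝ) (hC : 0 < C) (hA : 0 < A) (hB : 0 < B)
    (D : ℕ) (hD : 2 ≤ D) (P : ℕ → ℝ) (hP : ∀ j, 0 ≤ P j)
    (hpoly : ∀ j, 1 ≤ j → P j ≤ C * (j : ℝ) ^ (D - 1))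
    (hrec : ∀ j, 1 ≤ j →
      ∑ l ∈ Finset.range j, P l ≤ A + B * Real.sqrt (max 1 (P j))) :
    Summable P := by
  by_contra hns
  set S : ℕ → ℝ := fun n => ∑ l ∈ Finset.range n, P l with hSdef
  have hS : Filter.Tendsto S Filter.atTop Filter.atTop :=
    (not_summable_iff_tendsto_nat_atTop_of_nonneg hP).1 hns
  -- helper lemma: if partial sum is big, then P j is big
  have hkey : ∀ j t, 1 ≤ j → 2 ≤ t → B ≤ t → A + B * t ≤ S j → t ^ 2 ≤ P j := by
    intro j t hj ht2 htB hSt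
    have h1 := hrec j hj
    have h2 : t ≤ Real.sqrt (max 1 (P j)) := by
      have h := le_trans hSt h1
      have h' : B * t ≤ B * Real.sqrt (max 1 (P j)) := by linarith
      exact (mul_le_mul_iff_right₀ hB).mp h'
    have hm0 : (0:ℝ) ≤ max 1 (P j) := le_trans zero_le_one (le_max_left 1 (P j))
    have h3 : t ^ 2 ≤ max 1 (P j) := by
      nlinarith [Real.sq_sqrt hm0, Real.sqrt_nonneg (max 1 (P j))]
    rcases le_max_iff.mp h3 with h | h
    · nlinarith
    · exact h
  -- find j₀ where partial sum exceeds threshold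
  obtain ⟨j₁, hj₁⟩ := Filter.eventually_atTop.mp (hS.eventually_ge_atTop (A + B * (2 * B + 2)))
  set j₀ := max j₁ 1 with hj₀def
  have hj₀1 : 1 ≤ j₀ := le_max_right _ _
  -- exponential growth of partial sums
  have hind : ∀ n, A + B * ((2 * B + 2) * 2 ^ n) ≤ S (j₀ + n) := by
    intro n
    induction n with
    | zero => simpa using hj₁ j₀ (le_max_left _ _)
    | succ n ih =>
      set t : ℝ := (2 * B + 2) * 2 ^ n with ht
      have h2n : (1:ℝ) ≤ 2 ^ n := one_le_pow₀ (by norm_num : (1:ℝ) ≤ 2)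
      have ht2 : 2 ≤ t := by nlinarith
      have htB : B ≤ t := by nlinarith
      have hPj := hkey (j₀ + n) t (le_trans hj₀1 (Nat.le_add_right _ _)) ht2 htB ih
      have hstep : S (j₀ + (n + 1)) = S (j₀ + n) + P (j₀ + n) := by
        show (∑ l ∈ Finset.range (j₀ + n + 1), P l) = _
        rw [Finset.sum_range_succ]
      rw [hstep]
      have he : (2 * B + 2) * 2 ^ (n + 1) = t * 2 := by rw [ht]; ring
      rw [he]
      nlinarith
  -- hence P grows at least like 4^n
  have hPbig : ∀ n, (4:ℝ) ^ n ≤ P (j₀ + n) := by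
    intro n
    have h2n : (1:ℝ) ≤ 2 ^ n := one_le_pow₀ (by norm_num : (1:ℝ) ≤ 2)
    have ht2 : 2 ≤ (2 * B + 2) * 2 ^ n := by nlinarith
    have htB : B ≤ (2 * B + 2) * 2 ^ n := by nlinarith
    have hPj := hkey (j₀ + n) _ (le_trans hj₀1 (Nat.le_add_right _ _)) ht2 htB (hind n)
    have h4 : ((2:ℝ) ^ n) ^ 2 = (4:ℝ) ^ n := by
      rw [← pow_mul, mul_comm, pow_mul]; norm_num
    have hx : ((2 * B + 2) * 2 ^ n) ^ 2 = (2 * B + 2) ^ 2 * 4 ^ n := by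
      rw [mul_pow, h4]
    have h1 : (1:ℝ) ≤ (2 * B + 2) ^ 2 := by nlinarith
    have h2 : (4:ℝ) ^ n ≤ (2 * B + 2) ^ 2 * 4 ^ n :=
      le_mul_of_one_le_left (pow_nonneg (by norm_num) n) h1
    linarith
  -- polynomial beats exponential: contradiction
  have hCpos : (0:ℝ) < C * 2 ^ (D - 1) := by positivity
  have hlim : Filter.Tendsto (fun n : ℕ => (n:ℝ) ^ (D - 1) / 4 ^ n)
      Filter.atTop (nhds 0) :=
    tendsto_pow_const_div_const_pow_of_one_lt (D - 1) (by norm_num)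
  have hev : ∀ᶠ n : ℕ in Filter.atTop,
      (n:ℝ) ^ (D - 1) / 4 ^ n < (C * 2 ^ (D - 1))⁻¹ :=
    hlim.eventually_lt_const (by positivity)
  obtain ⟨n, hn1, hn2⟩ := (hev.and (Filter.eventually_ge_atTop j₀)).exists
  have h4pos : (0:ℝ) < 4 ^ n := by positivity
  have hlt : (n:ℝ) ^ (D - 1) < (C * 2 ^ (D - 1))⁻¹ * 4 ^ n :=
    (div_lt_iff₀ h4pos).mp hn1
  have hp1 : (4:ℝ) ^ n ≤ P (j₀ + n) := hPbig n
  have hp2 : P (j₀ + n) ≤ C * ((j₀ + n : ℕ) : ℝ) ^ (D - 1) :=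
    hpoly _ (le_trans hj₀1 (Nat.le_add_right _ _))
  have hcast : ((j₀ + n : ℕ) : ℝ) ≤ 2 * (n : ℝ) := by
    push_cast
    have : (j₀ : ℝ) ≤ (n : ℝ) := Nat.cast_le.mpr hn2
    linarith
  have hp3 : ((j₀ + n : ℕ) : ℝ) ^ (D - 1) ≤ (2 * (n:ℝ)) ^ (D - 1) :=
    pow_le_pow_left₀ (by positivity) hcast _
  have hp4 : (2 * (n:ℝ)) ^ (D - 1) = 2 ^ (D - 1) * (n:ℝ) ^ (D - 1) := mul_pow 2 _ _
  have hfin : (4:ℝ) ^ n < 4 ^ n := by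
    calc (4:ℝ) ^ n ≤ P (j₀ + n) := hp1
      _ ≤ C * ((j₀ + n : ℕ) : ℝ) ^ (D - 1) := hp2
      _ ≤ C * (2 ^ (D - 1) * (n:ℝ) ^ (D - 1)) := by
          rw [← hp4]; exact mul_le_mul_of_nonneg_left hp3 hC.le
      _ = (C * 2 ^ (D - 1)) * (n:ℝ) ^ (D - 1) := by ring
      _ < (C * 2 ^ (D - 1)) * ((C * 2 ^ (D - 1))⁻¹ * 4 ^ n) :=
          mul_lt_mul_of_pos_left hlt hCpos
      _ = 4 ^ n := by field_simp
  exact absurd hfin (lt_irrefl _)
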